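/- Let (E, ℰ) be a measurable space equipped with a finite measure ν̃, let T > 0, let N ∈ ℕ, let 0 < t₁ < t₂ < ... < t_N ≤ T be jump times with marks u₁, ..., u_N ∈ E, and let ν : [0,T] × E → ℝ be a measurable function with 0 ≤ ν(s,u) ≤ 1 for all (s,u). Define, for t ∈ [0,T], ξ_t = (∏_{n : t_n ≤ t} ν(t_n, u_n)) · exp(∫₀ᵗ ∫_E (1 − ν(s,u)) ν̃(du) ds), and for each n define the left limit ξ_{t_n}⁻ = (∏_{m < n} ν(t_m, u_m)) · exp(∫₀^{t_n} ∫_E (1 − ν(s,u)) ν̃(du) ds). Then for every t ∈ [0,T], ξ_t = 1 + ∑_{n : t_n ≤ t} ξ_{t_n}⁻ · (ν(t_n, u_n) − 1) − ∫₀ᵗ ξ_s (∫_E (ν(s,u) − 1) ν̃(du)) ds. -/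

import Mathlib

open MeasureTheory Set
open scoped Nat


lemma DD_ii_bdd {g : ℝ → ℝ} (hg : Measurable g) {x y K : ℝ}
    (hK : ∀ s ∈ Set.uIcc x y, |g s| ≤ K) : IntervalIntegrable g volume x y := by
  refine (intervalIntegrable_const (c := K)).mono_fun hg.aestronglyMeasurable ?_
  refine (ae_restrict_iff' measurableSet_uIoc).2 (ae_of_all _ fun s hs => ?_)
  have h1 := hK s (Set.uIoc_subset_uIcc hs)
  simpa [Real.norm_eq_abs] using h1.trans (le_abs_self K)

lemma DD_poly {f : ℝ → ℝ} (hf : Measurable f) {C : ℝ} (h0 : ∀ x, 0 ≤ f x)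
    (hC : ∀ x, f x ≤ C) (a : ℝ) :
    ∀ n : ℕ, ∀ c, a ≤ c →
      ∫ s in a..c, f s * (∫ r in a..s, f r) ^ n
        = (∫ r in a..c, f r) ^ (n + 1) / (n + 1) := by
  have habs : ∀ s, |f s| ≤ C := fun s => by
    rw [abs_of_nonneg (h0 s)]; exact hC s
  have hC0 : 0 ≤ C := le_trans (h0 0) (hC 0)
  have hfi : ∀ x y : ℝ, IntervalIntegrable f volume x y := fun x y =>
    DD_ii_bdd hf (fun s _ => habs s)
  set G : ℝ → ℝ := fun s => ∫ r in a..s, f r with hGdef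
  have hGfold : ∀ s, (∫ r in a..s, f r) = G s := fun s => by rw [hGdef]
  have hGmeas : Measurable G := by
    rw [hGdef]; exact (intervalIntegral.continuous_primitive hfi a).measurable
  have hGnn : ∀ s, a ≤ s → 0 ≤ G s := fun s hs => by
    rw [hGdef]; exact intervalIntegral.integral_nonneg hs (fun r _ => h0 r)
  have hGmono : ∀ x y, a ≤ x → x ≤ y → G x ≤ G y := by
    intro x y hax hxy
    have h1 := intervalIntegral.integral_add_adjacent_intervals (hfi a x) (hfi x y)
    have h2 : 0 ≤ ∫ r in x..y, f r := intervalIntegral.integral_nonneg hxy fun r _ => h0 r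
    have h3 : G x + (∫ r in x..y, f r) = G y := by rw [hGdef]; exact h1
    linarith
  simp only [hGfold]
  intro n
  induction n with
  | zero => intro c hac; simp [hGfold]
  | succ n ih =>
    intro c hac
    have hB0 : 0 ≤ G c := hGnn c hac
    have hGleB : ∀ s ∈ Set.Icc a c, |G s| ≤ G c := fun s hs => by
      rw [abs_of_nonneg (hGnn s hs.1)]; exact hGmono s c hs.1 hs.2
    have hWi : ∀ (m : ℕ) (x y : ℝ), x ∈ Set.Icc a c → y ∈ Set.Icc a c →
        IntervalIntegrable (fun s => f s * G s ^ m) volume x y := by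
      intro m x y hx hy
      refine DD_ii_bdd (hf.mul (hGmeas.pow_const m)) (K := C * G c ^ m) fun s hs => ?_
      have hsub : Set.uIcc x y ⊆ Set.Icc a c := by
        rw [← Set.uIcc_of_le hac]
        exact Set.uIcc_subset_uIcc (by rw [Set.uIcc_of_le hac]; exact hx)
          (by rw [Set.uIcc_of_le hac]; exact hy)
      have hs' : s ∈ Set.Icc a c := hsub hs
      show |f s * G s ^ m| ≤ _
      rw [abs_mul, abs_pow]
      exact mul_le_mul (habs s) (pow_le_pow_left₀ (abs_nonneg _) (hGleB s hs') m)
        (by positivity) hC0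
    have hIocfin : IsFiniteMeasure (volume.restrict (Set.Ioc a c)) := by
      constructor
      rw [Measure.restrict_apply_univ, Real.volume_Ioc]
      exact ENNReal.ofReal_lt_top
    have hFint : Integrable
        (Function.uncurry fun s r : ℝ => (f s * G s ^ n) * (if r ≤ s then f r else 0))
        ((volume.restrict (Set.Ioc a c)).prod (volume.restrict (Set.Ioc a c))) := by
      have heq : (Function.uncurry fun s r : ℝ => (f s * G s ^ n) * (if r ≤ s then f r else 0))
          = fun p : ℝ × ℝ => (f p.1 * G p.1 ^ n) * (if p.2 ≤ p.1 then f p.2 else 0) := rfl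
      rw [heq]
      constructor
      · exact (((hf.comp measurable_fst).mul ((hGmeas.comp measurable_fst).pow_const n)).mul
          (Measurable.ite (measurableSet_le measurable_snd measurable_fst)
            (hf.comp measurable_snd) measurable_const)).aestronglyMeasurable
      · haveI := hIocfin
        refine HasFiniteIntegral.of_bounded (C := (C * G c ^ n) * C) ?_
        rw [Measure.prod_restrict]
        refine (ae_restrict_iff' (measurableSet_Ioc.prod measurableSet_Ioc)).2
          (ae_of_all _ ?_)
        rintro ⟨s, r⟩ ⟨hs, hr⟩
        simp only [Real.norm_eq_abs]
        rw [abs_mul]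
        have h1 : |f s * G s ^ n| ≤ C * G c ^ n := by
          rw [abs_mul, abs_pow]
          exact mul_le_mul (habs s) (pow_le_pow_left₀ (abs_nonneg _)
            (hGleB s ⟨hs.1.le, hs.2⟩) n) (by positivity) hC0
        have h2 : |if r ≤ s then f r else 0| ≤ C := by
          split
          · exact habs r
          · simpa using hC0
        exact mul_le_mul h1 h2 (abs_nonneg _) (by positivity)
    have key : ∫ s in Set.Ioc a c, f s * G s ^ (n + 1)
        = ∫ r in Set.Ioc a c, f r * ((G c ^ (n + 1) - G r ^ (n + 1)) / (n + 1)) := by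
      calc ∫ s in Set.Ioc a c, f s * G s ^ (n + 1)
          = ∫ s in Set.Ioc a c, ∫ r in Set.Ioc a c,
              (f s * G s ^ n) * (if r ≤ s then f r else 0) := by
            refine setIntegral_congr_fun measurableSet_Ioc fun s hs => ?_
            have hGs : G s = ∫ r in Set.Ioc a c, (if r ≤ s then f r else 0) := by
              have h1 : (fun r => if r ≤ s then f r else 0) = (Set.Iic s).indicator f := by
                funext r; simp [Set.indicator_apply, Set.mem_Iic]
              rw [h1, integral_indicator measurableSet_Iic,
                Measure.restrict_restrict measurableSet_Iic]
              have h2 : Set.Iic s ∩ Set.Ioc a c = Set.Ioc a s := by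
                ext r
                simp only [Set.mem_inter_iff, Set.mem_Iic, Set.mem_Ioc]
                constructor
                · rintro ⟨h3, h4, h5⟩; exact ⟨h4, h3⟩
                · rintro ⟨h4, h3⟩; exact ⟨h3, h4, h3.trans hs.2⟩
              rw [h2, ← intervalIntegral.integral_of_le hs.1.le, hGfold]
            rw [integral_const_mul, ← hGs]; ring
        _ = ∫ r in Set.Ioc a c, ∫ s in Set.Ioc a c,
              (f s * G s ^ n) * (if r ≤ s then f r else 0) :=
            MeasureTheory.integral_integral_swap hFint
        _ = ∫ r in Set.Ioc a c, f r * ((G c ^ (n + 1) - G r ^ (n + 1)) / (n + 1)) := by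
            refine setIntegral_congr_fun measurableSet_Ioc fun r hr => ?_
            have har : a < r := hr.1
            have hrc : r ≤ c := hr.2
            have h1 : (fun s => (f s * G s ^ n) * (if r ≤ s then f r else 0))
                = fun s => f r * ((Set.Ici r).indicator (fun s => f s * G s ^ n) s) := by
              funext s
              by_cases hrs : r ≤ s <;>
                simp [Set.indicator_apply, Set.mem_Ici, hrs] <;> ring
            rw [h1, integral_const_mul, integral_indicator measurableSet_Ici,
              Measure.restrict_restrict measurableSet_Ici]
            have h2 : Set.Ici r ∩ Set.Ioc a c = Set.Icc r c := by
              ext x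
              simp only [Set.mem_inter_iff, Set.mem_Ici, Set.mem_Ioc, Set.mem_Icc]
              constructor
              · rintro ⟨h3, h4, h5⟩; exact ⟨h3, h5⟩
              · rintro ⟨h3, h5⟩; exact ⟨h3, har.trans_le h3, h5⟩
            rw [h2, integral_Icc_eq_integral_Ioc, ← intervalIntegral.integral_of_le hrc]
            have hsplit := intervalIntegral.integral_add_adjacent_intervals
              (hWi n a r ⟨le_rfl, hac⟩ ⟨har.le, hrc⟩) (hWi n r c ⟨har.le, hrc⟩ ⟨hac, le_rfl⟩)
            have e1 := ih c hac
            have e2 := ih r har.le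
            have hval : ∫ s in r..c, f s * G s ^ n
                = G c ^ (n + 1) / (n + 1) - G r ^ (n + 1) / (n + 1) := by
              rw [← e1, ← e2]; linarith
            rw [hval]; ring
    have hsum : ∫ r in Set.Ioc a c, f r * ((G c ^ (n + 1) - G r ^ (n + 1)) / (n + 1))
        = (G c ^ (n + 1) / (n + 1)) * G c
          - (1 / ((n : ℝ) + 1)) * ∫ r in Set.Ioc a c, f r * G r ^ (n + 1) := by
      have hint1 : IntegrableOn (fun r => (G c ^ (n + 1) / ((n : ℝ) + 1)) * f r)
          (Set.Ioc a c) volume := ((hfi a c).1).const_mul _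
      have hint2 : IntegrableOn (fun r => (1 / ((n : ℝ) + 1)) * (f r * G r ^ (n + 1)))
          (Set.Ioc a c) volume :=
        ((hWi (n + 1) a c ⟨le_rfl, hac⟩ ⟨hac, le_rfl⟩).1).const_mul _
      have heq : (fun r => f r * ((G c ^ (n + 1) - G r ^ (n + 1)) / (n + 1)))
          = fun r => (G c ^ (n + 1) / ((n : ℝ) + 1)) * f r
            - (1 / ((n : ℝ) + 1)) * (f r * G r ^ (n + 1)) := by
        funext r; ring
      rw [heq, integral_sub hint1 hint2, integral_const_mul, integral_const_mul]
      have : ∫ r in Set.Ioc a c, f r = G c := by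
        rw [← intervalIntegral.integral_of_le hac, hGfold]
      rw [this]
    rw [intervalIntegral.integral_of_le hac]
    have hfin := key.trans hsum
    have hd : ((n : ℝ) + 1) ≠ 0 := by positivity
    have hd2 : ((n : ℝ) + 1 + 1) ≠ 0 := by positivity
    set I := ∫ s in Set.Ioc a c, f s * G s ^ (n + 1) with hIdef
    have hcast : ((n : ℕ) + 1 + 1 : ℝ) = (n : ℝ) + 1 + 1 := by push_cast; ring
    rw [eq_div_iff (by push_cast; positivity)]
    have h3 : I * ((n : ℝ) + 1) = G c ^ (n + 1) * G c - I := by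
      have := congrArg (fun z => z * ((n : ℝ) + 1)) hfin
      rw [this]
      field_simp
    have hp : G c ^ (n + 1 + 1) = G c ^ (n + 1) * G c := pow_succ _ _
    push_cast
    linarith [h3]
lemma DD_exp_base {f : ℝ → ℝ} (hf : Measurable f) {C : ℝ} (h0 : ∀ x, 0 ≤ f x)
    (hC : ∀ x, f x ≤ C) {a b : ℝ} (hab : a ≤ b) :
    ∫ s in a..b, f s * Real.exp (∫ r in a..s, f r)
      = Real.exp (∫ r in a..b, f r) - 1 := by
  have habs : ∀ s, |f s| ≤ C := fun s => by rw [abs_of_nonneg (h0 s)]; exact hC s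
  have hC0 : 0 ≤ C := le_trans (h0 0) (hC 0)
  have hfi : ∀ x y : ℝ, IntervalIntegrable f volume x y := fun x y =>
    DD_ii_bdd hf (fun s _ => habs s)
  set G : ℝ → ℝ := fun s => ∫ r in a..s, f r with hGdef
  have hGfold : ∀ s, (∫ r in a..s, f r) = G s := fun s => by rw [hGdef]
  have hGcont : Continuous G := by
    rw [hGdef]; exact intervalIntegral.continuous_primitive hfi a
  have hGmeas : Measurable G := hGcont.measurable
  have hGnn : ∀ s, a ≤ s → 0 ≤ G s := fun s hs => by
    rw [hGdef]; exact intervalIntegral.integral_nonneg hs (fun r _ => h0 r)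
  have hGmono : ∀ x y, a ≤ x → x ≤ y → G x ≤ G y := by
    intro x y hax hxy
    have h1 := intervalIntegral.integral_add_adjacent_intervals (hfi a x) (hfi x y)
    have h2 : 0 ≤ ∫ r in x..y, f r := intervalIntegral.integral_nonneg hxy fun r _ => h0 r
    have h3 : G x + (∫ r in x..y, f r) = G y := by rw [hGdef]; exact h1
    linarith
  simp only [hGfold]
  -- expand the exponential into its power series
  have hexp : ∀ x : ℝ, Real.exp x = ∑' n : ℕ, x ^ n / n ! := by
    intro x
    rw [Real.exp_eq_exp_ℝ, NormedSpace.exp_eq_tsum_div]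
  have hpt : ∀ s, f s * Real.exp (G s) = ∑' n : ℕ, f s * G s ^ n / n ! := by
    intro s
    rw [hexp, ← tsum_mul_left]
    congr 1; funext n; ring
  have hpoly : ∀ n : ℕ, ∫ s in a..b, f s * G s ^ n = G b ^ (n + 1) / (n + 1) := by
    intro n
    have := DD_poly hf h0 hC a n b hab
    simpa only [hGfold] using this
  have hWi : ∀ (m : ℕ), IntervalIntegrable (fun s => f s * G s ^ m) volume a b := by
    intro m
    have hGleB : ∀ s ∈ Set.uIcc a b, |G s| ≤ G b := fun s hs => by
      rw [Set.uIcc_of_le hab] at hs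
      rw [abs_of_nonneg (hGnn s hs.1)]; exact hGmono s b hs.1 hs.2
    refine DD_ii_bdd (hf.mul (hGmeas.pow_const m)) (K := C * G b ^ m) fun s hs => ?_
    show |f s * G s ^ m| ≤ _
    rw [abs_mul, abs_pow]
    exact mul_le_mul (habs s) (pow_le_pow_left₀ (abs_nonneg _) (hGleB s hs) m)
      (by positivity) hC0
  have hsummable : Summable fun n : ℕ => G b ^ (n + 1) / (n + 1)! := by
    have h1 := Real.summable_pow_div_factorial (G b)
    exact h1.comp_injective Nat.succ_injective
  have hterm : ∀ n : ℕ, (G b ^ (n + 1) / (n + 1)) / n ! = G b ^ (n + 1) / (n + 1)! := by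
    intro n
    rw [div_div, Nat.factorial_succ]
    push_cast
    ring_nf
  have hint : ∀ n : ℕ,
      Integrable (fun s => f s * G s ^ n / n !) (volume.restrict (Set.Ioc a b)) := by
    intro n
    exact ((hWi n).1).div_const _
  have hnorm : ∀ n : ℕ, (∫ s in Set.Ioc a b, ‖f s * G s ^ n / (n ! : ℝ)‖)
      = G b ^ (n + 1) / (n + 1)! := by
    intro n
    have h1 : ∀ s ∈ Set.Ioc a b, ‖f s * G s ^ n / (n ! : ℝ)‖ = f s * G s ^ n / n ! := by
      intro s hs
      have h2 := hGnn s hs.1.le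
      rw [Real.norm_eq_abs, abs_of_nonneg]
      exact div_nonneg (mul_nonneg (h0 s) (pow_nonneg h2 n)) (Nat.cast_nonneg _)
    rw [setIntegral_congr_fun measurableSet_Ioc h1]
    have h2 : ∫ s in Set.Ioc a b, f s * G s ^ n / n !
        = (∫ s in Set.Ioc a b, f s * G s ^ n) / n ! := integral_div _ _
    rw [h2, ← intervalIntegral.integral_of_le hab, hpoly n, hterm n]
  calc ∫ s in a..b, f s * Real.exp (G s)
      = ∫ s in Set.Ioc a b, ∑' n : ℕ, f s * G s ^ n / n ! := by
        rw [intervalIntegral.integral_of_le hab]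
        refine setIntegral_congr_fun measurableSet_Ioc fun s _ => ?_
        exact hpt s
    _ = ∑' n : ℕ, ∫ s in Set.Ioc a b, f s * G s ^ n / n ! := by
        refine (integral_tsum_of_summable_integral_norm hint ?_).symm
        simp only [hnorm]
        exact hsummable
    _ = ∑' n : ℕ, G b ^ (n + 1) / (n + 1)! := by
        congr 1; funext n
        rw [← intervalIntegral.integral_of_le hab]
        have h2 : ∫ s in a..b, f s * G s ^ n / n !
            = (∫ s in a..b, f s * G s ^ n) / n ! := intervalIntegral.integral_div _ _
        rw [h2, hpoly n, hterm n]
    _ = Real.exp (G b) - 1 := by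
        have h1 := Real.summable_pow_div_factorial (G b)
        have h2 := h1.tsum_eq_zero_add
        rw [hexp (G b)]
        simp only [pow_zero, Nat.factorial_zero, Nat.cast_one] at h2
        rw [h2]
        push_cast
        ring

lemma DD_exp_int {f : ℝ → ℝ} (hf : Measurable f) {C : ℝ} (h0 : ∀ x, 0 ≤ f x)
    (hC : ∀ x, f x ≤ C) {a b : ℝ} (hab : a ≤ b) :
    ∫ s in a..b, f s * Real.exp (∫ r in (0 : ℝ)..s, f r)
      = Real.exp (∫ r in (0 : ℝ)..b, f r) - Real.exp (∫ r in (0 : ℝ)..a, f r) := by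
  have habs : ∀ s, |f s| ≤ C := fun s => by rw [abs_of_nonneg (h0 s)]; exact hC s
  have hfi : ∀ x y : ℝ, IntervalIntegrable f volume x y := fun x y =>
    DD_ii_bdd hf (fun s _ => habs s)
  have hsplit : ∀ s : ℝ, (∫ r in (0 : ℝ)..s, f r)
      = (∫ r in (0 : ℝ)..a, f r) + ∫ r in a..s, f r := fun s =>
    (intervalIntegral.integral_add_adjacent_intervals (hfi 0 a) (hfi a s)).symm
  calc ∫ s in a..b, f s * Real.exp (∫ r in (0 : ℝ)..s, f r)
      = ∫ s in a..b, Real.exp (∫ r in (0 : ℝ)..a, f r)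
          * (f s * Real.exp (∫ r in a..s, f r)) := by
        refine intervalIntegral.integral_congr fun s _ => ?_
        rw [hsplit s, Real.exp_add]; ring
    _ = Real.exp (∫ r in (0 : ℝ)..a, f r)
          * ∫ s in a..b, f s * Real.exp (∫ r in a..s, f r) :=
        intervalIntegral.integral_const_mul _ _
    _ = Real.exp (∫ r in (0 : ℝ)..a, f r) * (Real.exp (∫ r in a..b, f r) - 1) := by
        rw [DD_exp_base hf h0 hC hab]
    _ = Real.exp (∫ r in (0 : ℝ)..b, f r) - Real.exp (∫ r in (0 : ℝ)..a, f r) := by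
        rw [hsplit b, Real.exp_add]; ring


/-- Pathwise equivalence between the Doléans–Dade product formula and the
stochastic-exponential (jump-plus-drift) integral equation, for a path with
finitely many jump times `t₁ < ⋯ < t_N` with marks `u₁, …, u_N`. -/
theorem doleans_dade_product_integral_equation
    {E : Type*} [MeasurableSpace E] (μ : Measure E) [IsFiniteMeasure μ]
    (T : ℝ) (hT : 0 < T) (N : ℕ)
    (tj : Fin N → ℝ) (htj_mono : StrictMono tj)
    (htj_pos : ∀ n, 0 < tj n) (htj_le : ∀ n, tj n ≤ T)
    (u : Fin N → E)
    (ν : ℝ → E → ℝ) (hν_meas : Measurable (Function.uncurry ν))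
    (hν01 : ∀ s ∈ Icc (0 : ℝ) T, ∀ e : E, ν s e ∈ Icc (0 : ℝ) 1)
    (ξ : ℝ → ℝ)
    (hξ : ∀ t ∈ Icc (0 : ℝ) T,
      ξ t = (∏ n ∈ Finset.univ.filter (fun n => tj n ≤ t), ν (tj n) (u n)) *
        Real.exp (∫ s in (0 : ℝ)..t, ∫ e, (1 - ν s e) ∂μ))
    (ξm : Fin N → ℝ)
    (hξm : ∀ n : Fin N,
      ξm n = (∏ m ∈ Finset.univ.filter (fun m => m < n), ν (tj m) (u m)) *
        Real.exp (∫ s in (0 : ℝ)..(tj n), ∫ e, (1 - ν s e) ∂μ)) :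
    ∀ t ∈ Icc (0 : ℝ) T,
      ξ t = 1 + (∑ n ∈ Finset.univ.filter (fun n => tj n ≤ t),
          ξm n * (ν (tj n) (u n) - 1))
        - ∫ s in (0 : ℝ)..t, ξ s * (∫ e, (ν s e - 1) ∂μ) := by
  classical
  -- the (truncated) drift density
  obtain ⟨f, hfpt⟩ : ∃ g : ℝ → ℝ,
      ∀ s, g s = if s ∈ Icc (0 : ℝ) T then (∫ e, (1 - ν s e) ∂μ) else 0 :=
    ⟨_, fun _ => rfl⟩
  have hh_meas : Measurable fun s : ℝ => ∫ e, (1 - ν s e) ∂μ := by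
    have h1 : StronglyMeasurable fun p : ℝ × E => 1 - ν p.1 p.2 :=
      (measurable_const.sub hν_meas).stronglyMeasurable
    exact h1.integral_prod_right'.measurable
  have hf_meas : Measurable f := by
    rw [show f = fun s => if s ∈ Icc (0 : ℝ) T then (∫ e, (1 - ν s e) ∂μ) else 0
      from funext hfpt]
    exact Measurable.ite measurableSet_Icc hh_meas measurable_const
  have hC0 : (0 : ℝ) ≤ (μ Set.univ).toReal := ENNReal.toReal_nonneg
  have hνs_meas : ∀ s, Measurable (ν s) := fun s =>
    hν_meas.comp measurable_prodMk_left
  have hν_int : ∀ s ∈ Icc (0 : ℝ) T, Integrable (fun e => 1 - ν s e) μ := by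
    intro s hs
    refine ⟨(measurable_const.sub (hνs_meas s)).aestronglyMeasurable, ?_⟩
    refine HasFiniteIntegral.of_bounded (C := 1) (ae_of_all _ fun e => ?_)
    have h1 := hν01 s hs e
    rw [Set.mem_Icc] at h1
    rw [Real.norm_eq_abs, abs_of_nonneg (by linarith [h1.2])]
    linarith [h1.1]
  have hf0 : ∀ s, 0 ≤ f s := by
    intro s
    rw [hfpt s]
    split
    · next hs =>
      refine integral_nonneg fun e => ?_
      have h1 := hν01 s hs e
      rw [Set.mem_Icc] at h1
      simp only [Pi.zero_apply]
      linarith [h1.2]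
    · exact le_refl _
  have hfC : ∀ s, f s ≤ (μ Set.univ).toReal := by
    intro s
    rw [hfpt s]
    split
    · next hs =>
      calc ∫ e, (1 - ν s e) ∂μ ≤ ∫ _, (1 : ℝ) ∂μ := by
            refine integral_mono (hν_int s hs) (integrable_const 1) fun e => ?_
            have h1 := hν01 s hs e
            rw [Set.mem_Icc] at h1
            linarith [h1.1]
        _ = (μ Set.univ).toReal := by simp [measureReal_def]
    · exact hC0
  have hfi : ∀ x y : ℝ, IntervalIntegrable f volume x y := fun x y =>
    DD_ii_bdd hf_meas (K := (μ Set.univ).toReal)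
      (fun s _ => by rw [abs_of_nonneg (hf0 s)]; exact hfC s)
  -- congruence of the exponents on [0, T]
  have hint_congr : ∀ t ∈ Icc (0 : ℝ) T,
      (∫ s in (0 : ℝ)..t, ∫ e, (1 - ν s e) ∂μ) = ∫ s in (0 : ℝ)..t, f s := by
    intro t ht
    refine intervalIntegral.integral_congr fun s hs => ?_
    rw [Set.uIcc_of_le ht.1] at hs
    have h1 : s ∈ Icc (0 : ℝ) T := ⟨hs.1, hs.2.trans ht.2⟩
    rw [hfpt s, if_pos h1]
  -- the exponential factor and the nice version of ξ
  obtain ⟨Φ, hΦpt⟩ : ∃ g : ℝ → ℝ,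
      ∀ s, g s = Real.exp (∫ r in (0 : ℝ)..s, f r) := ⟨_, fun _ => rfl⟩
  obtain ⟨Ξ, hΞpt⟩ : ∃ g : ℝ → ℝ, ∀ s, g s =
      (∏ m ∈ Finset.univ.filter (fun m => tj m ≤ s), ν (tj m) (u m)) * Φ s :=
    ⟨_, fun _ => rfl⟩
  have hΦ0 : Φ 0 = 1 := by
    rw [hΦpt, intervalIntegral.integral_same, Real.exp_zero]
  have hΦcont : Continuous Φ := by
    rw [show Φ = fun s => Real.exp (∫ r in (0 : ℝ)..s, f r) from funext hΦpt]
    exact (intervalIntegral.continuous_primitive hfi 0).rexp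
  have hν01' : ∀ m : Fin N, ν (tj m) (u m) ∈ Icc (0 : ℝ) 1 := fun m =>
    hν01 (tj m) ⟨(htj_pos m).le, htj_le m⟩ (u m)
  have hPr01 : ∀ (s : Finset (Fin N)),
      (∏ m ∈ s, ν (tj m) (u m)) ∈ Icc (0 : ℝ) 1 := by
    intro s
    constructor
    · exact Finset.prod_nonneg fun m _ => (hν01' m).1
    · exact Finset.prod_le_one (fun m _ => (hν01' m).1) (fun m _ => (hν01' m).2)
  have hΞmeas : Measurable Ξ := by
    rw [show Ξ = fun s => (∏ m ∈ Finset.univ.filter (fun m => tj m ≤ s),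
        ν (tj m) (u m)) * Φ s from funext hΞpt]
    refine Measurable.mul ?_ hΦcont.measurable
    have h1 : (fun s : ℝ => ∏ m ∈ Finset.univ.filter (fun m => tj m ≤ s),
        ν (tj m) (u m)) = fun s : ℝ => ∏ m ∈ Finset.univ,
          (if tj m ≤ s then ν (tj m) (u m) else 1) := by
      funext s; rw [Finset.prod_filter]
    rw [h1]
    exact Finset.measurable_prod _ fun m _ =>
      Measurable.ite measurableSet_Ici measurable_const measurable_const
  -- bound for Φ on a compact interval
  have hΦbd : ∀ x y : ℝ, ∀ s ∈ Set.uIcc x y,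
      |Φ s| ≤ Real.exp ((μ Set.univ).toReal * (|x| + |y|)) := by
    intro x y s hs
    have hsb : |s| ≤ |x| + |y| := by
      rw [Set.mem_uIcc] at hs
      rcases hs with ⟨h1, h2⟩ | ⟨h1, h2⟩ <;> rw [abs_le] <;> constructor <;>
        nlinarith [neg_abs_le x, le_abs_self x, neg_abs_le y, le_abs_self y]
    have h2 : (∫ r in (0 : ℝ)..s, f r) ≤ (μ Set.univ).toReal * |s| := by
      rcases le_total 0 s with h3 | h3
      · rw [abs_of_nonneg h3]
        calc (∫ r in (0 : ℝ)..s, f r) ≤ ∫ _ in (0 : ℝ)..s, (μ Set.univ).toReal :=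
              intervalIntegral.integral_mono_on h3 (hfi 0 s)
                intervalIntegrable_const (fun r _ => hfC r)
          _ = (μ Set.univ).toReal * s := by simp [mul_comm]
      · rw [intervalIntegral.integral_symm]
        have h4 : 0 ≤ ∫ r in s..(0 : ℝ), f r :=
          intervalIntegral.integral_nonneg h3 fun r _ => hf0 r
        have h5 : 0 ≤ (μ Set.univ).toReal * |s| := by positivity
        linarith
    rw [hΦpt, abs_of_nonneg (Real.exp_pos _).le]
    refine Real.exp_le_exp.2 (h2.trans ?_)
    have h6 : 0 ≤ (μ Set.univ).toReal := hC0
    nlinarith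
  have hΞint : ∀ x y : ℝ, IntervalIntegrable (fun s => Ξ s * f s) volume x y := by
    intro x y
    refine DD_ii_bdd (hΞmeas.mul hf_meas)
      (K := Real.exp ((μ Set.univ).toReal * (|x| + |y|)) * (μ Set.univ).toReal)
      (fun s hs => ?_)
    show |Ξ s * f s| ≤ _
    rw [abs_mul]
    have h1 : |Ξ s| ≤ Real.exp ((μ Set.univ).toReal * (|x| + |y|)) := by
      rw [hΞpt, abs_mul]
      have h2 := hPr01 (Finset.univ.filter (fun m => tj m ≤ s))
      rw [Set.mem_Icc] at h2
      calc |∏ m ∈ Finset.univ.filter (fun m => tj m ≤ s), ν (tj m) (u m)| * |Φ s|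
          ≤ 1 * |Φ s| := by
            refine mul_le_mul_of_nonneg_right ?_ (abs_nonneg _)
            rw [abs_of_nonneg h2.1]; exact h2.2
        _ = |Φ s| := one_mul _
        _ ≤ _ := hΦbd x y s hs
    have h2 : |f s| ≤ (μ Set.univ).toReal := by
      rw [abs_of_nonneg (hf0 s)]; exact hfC s
    exact mul_le_mul h1 h2 (abs_nonneg _) (Real.exp_pos _).le
  -- the basic segment computation
  have hseg : ∀ x y : ℝ, x ≤ y → ∀ Q : Finset (Fin N),
      (∀ s ∈ Set.Ioo x y, Finset.univ.filter (fun m => tj m ≤ s) = Q) →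
      ∫ s in x..y, Ξ s * f s = (∏ m ∈ Q, ν (tj m) (u m)) * (Φ y - Φ x) := by
    intro x y hxy Q hQ
    have hy : ∀ᵐ s : ℝ ∂volume, s ≠ y := by
      rw [ae_iff]
      have : {s : ℝ | ¬s ≠ y} = {y} := by ext s; simp
      rw [this]
      exact measure_singleton y
    have hae : ∀ᵐ s ∂(volume : Measure ℝ), s ∈ Set.uIoc x y → Ξ s * f s
        = (∏ m ∈ Q, ν (tj m) (u m)) * (f s * Real.exp (∫ r in (0 : ℝ)..s, f r)) := by
      filter_upwards [hy] with s hsy hs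
      rw [Set.uIoc_of_le hxy] at hs
      have hs' : s ∈ Set.Ioo x y := ⟨hs.1, lt_of_le_of_ne hs.2 hsy⟩
      rw [hΞpt, hQ s hs', hΦpt]; ring
    rw [intervalIntegral.integral_congr_ae hae, intervalIntegral.integral_const_mul,
      DD_exp_int hf_meas hf0 hfC hxy, hΦpt y, hΦpt x]
  -- the relation for the left limits
  have hxim : ∀ m : Fin N, ξm m =
      (∏ j ∈ Finset.univ.filter (fun j => j < m), ν (tj j) (u j)) * Φ (tj m) := by
    intro m
    rw [hξm m, hint_congr (tj m) ⟨(htj_pos m).le, htj_le m⟩, hΦpt]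
  -- main induction: the equation at each jump's left limit
  have claimB : ∀ k : ℕ, ∀ n : Fin N, (n : ℕ) = k →
      ξm n = 1 + (∑ m ∈ Finset.univ.filter (fun m => m < n),
          ξm m * (ν (tj m) (u m) - 1)) + ∫ s in (0 : ℝ)..(tj n), Ξ s * f s := by
    intro k
    induction k with
    | zero =>
      intro n hn
      have hfil1 : Finset.univ.filter (fun m : Fin N => m < n) = ∅ := by
        refine Finset.filter_eq_empty_iff.2 fun m _ => ?_
        rw [Fin.lt_def, hn]
        omega
      have hI : ∫ s in (0 : ℝ)..(tj n), Ξ s * f s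
          = (∏ m ∈ (∅ : Finset (Fin N)), ν (tj m) (u m)) * (Φ (tj n) - Φ 0) := by
        refine hseg 0 (tj n) (htj_pos n).le ∅ fun s hs => ?_
        refine Finset.filter_eq_empty_iff.2 fun m _ => ?_
        intro hms
        have h1 : n ≤ m := by rw [Fin.le_def, hn]; omega
        have h2 : tj n ≤ tj m := htj_mono.monotone h1
        linarith [hs.2]
      rw [hxim n, hfil1, hI, hΦ0]
      simp
    | succ k ih =>
      intro n hn
      have hkN : k < N := by have := n.isLt; omega
      set p : Fin N := ⟨k, hkN⟩ with hpdef
      have hpn : p < n := by rw [Fin.lt_def, hn]; simp [hpdef]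
      have htpn : tj p < tj n := htj_mono hpn
      have hfil : Finset.univ.filter (fun m : Fin N => m < n)
          = insert p (Finset.univ.filter (fun m : Fin N => m < p)) := by
        ext m
        simp only [Finset.mem_filter, Finset.mem_insert, Finset.mem_univ, true_and,
          Fin.lt_def, Fin.ext_iff, hn, hpdef]
        omega
      have hpnotmem : p ∉ Finset.univ.filter (fun m : Fin N => m < p) := by simp
      have hadd := intervalIntegral.integral_add_adjacent_intervals
        (hΞint 0 (tj p)) (hΞint (tj p) (tj n))
      have hseg2 : ∫ s in (tj p)..(tj n), Ξ s * f s
          = (∏ m ∈ Finset.univ.filter (fun m : Fin N => m < n), ν (tj m) (u m))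
            * (Φ (tj n) - Φ (tj p)) := by
        refine hseg (tj p) (tj n) htpn.le _ fun s hs => ?_
        ext m
        simp only [Finset.mem_filter, Finset.mem_univ, true_and]
        constructor
        · intro hms
          exact htj_mono.lt_iff_lt.1 (lt_of_le_of_lt hms hs.2)
        · intro hmn
          have hmp : m ≤ p := by
            rw [Fin.le_def]; rw [Fin.lt_def, hn] at hmn; simp only [hpdef]; omega
          exact le_trans (htj_mono.monotone hmp) hs.1.le
      have hIH := ih p (by simp [hpdef])
      rw [hfil, Finset.sum_insert hpnotmem, ← hadd, hseg2, hfil,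
        Finset.prod_insert hpnotmem, hxim n, hfil, Finset.prod_insert hpnotmem]
      have hxp := hxim p
      linear_combination hIH - ν (tj p) (u p) * hxp
  -- now the main statement
  intro t ht
  have hΞeq : ∀ s ∈ Icc (0 : ℝ) T, ξ s = Ξ s := fun s hs => by
    rw [hξ s hs, hint_congr s hs, hΞpt, hΦpt]
  have hIneg : ∫ s in (0 : ℝ)..t, ξ s * (∫ e, (ν s e - 1) ∂μ)
      = - ∫ s in (0 : ℝ)..t, Ξ s * f s := by
    rw [← intervalIntegral.integral_neg]
    refine intervalIntegral.integral_congr fun s hs => ?_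
    rw [Set.uIcc_of_le ht.1] at hs
    have hsT : s ∈ Icc (0 : ℝ) T := ⟨hs.1, hs.2.trans ht.2⟩
    have h1 : ξ s = Ξ s := hΞeq s hsT
    have h2 : (∫ e, (ν s e - 1) ∂μ) = - f s := by
      have h3 : (fun e => ν s e - 1) = fun e => -(1 - ν s e) := by funext e; ring
      rw [h3, integral_neg, hfpt s, if_pos hsT]
    rw [h1, h2]; ring
  rw [hIneg, sub_neg_eq_add]
  by_cases hFt : Finset.univ.filter (fun n : Fin N => tj n ≤ t) = ∅
  · have hI : ∫ s in (0 : ℝ)..t, Ξ s * f s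
        = (∏ m ∈ (∅ : Finset (Fin N)), ν (tj m) (u m)) * (Φ t - Φ 0) := by
      refine hseg 0 t ht.1 ∅ fun s hs => ?_
      refine Finset.filter_eq_empty_iff.2 fun m _ => ?_
      intro hms
      have h1 : tj m ≤ t := hms.trans hs.2.le
      exact (Finset.filter_eq_empty_iff.1 hFt (Finset.mem_univ m)) h1
    rw [hΞeq t ht, hΞpt, hFt, hI, hΦ0]
    simp
  · have hne : (Finset.univ.filter (fun n : Fin N => tj n ≤ t)).Nonempty :=
      Finset.nonempty_of_ne_empty hFt
    set nst : Fin N := Finset.max' _ hne with hnstdef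
    have hnst_mem := Finset.max'_mem _ hne
    have hnst_le : tj nst ≤ t := (Finset.mem_filter.1 hnst_mem).2
    have hmaxle : ∀ m : Fin N, tj m ≤ t → m ≤ nst := fun m hm =>
      Finset.le_max' _ m (Finset.mem_filter.2 ⟨Finset.mem_univ m, hm⟩)
    have hfilt : Finset.univ.filter (fun m : Fin N => tj m ≤ t)
        = insert nst (Finset.univ.filter (fun m : Fin N => m < nst)) := by
      ext m
      simp only [Finset.mem_filter, Finset.mem_insert, Finset.mem_univ, true_and]
      constructor
      · intro hm
        rcases eq_or_lt_of_le (hmaxle m hm) with h | h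
        · exact Or.inl h
        · exact Or.inr h
      · rintro (rfl | h)
        · exact hnst_le
        · exact le_trans (htj_mono.monotone h.le) hnst_le
    have hnotmem : nst ∉ Finset.univ.filter (fun m : Fin N => m < nst) := by simp
    have hsegf : ∫ s in (tj nst)..t, Ξ s * f s
        = (∏ m ∈ insert nst (Finset.univ.filter (fun m : Fin N => m < nst)),
            ν (tj m) (u m)) * (Φ t - Φ (tj nst)) := by
      refine hseg (tj nst) t hnst_le _ fun s hs => ?_
      ext m
      simp only [Finset.mem_filter, Finset.mem_insert, Finset.mem_univ, true_and]
      constructor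
      · intro hm
        have h1 : tj m ≤ t := hm.trans hs.2.le
        rcases eq_or_lt_of_le (hmaxle m h1) with h | h
        · exact Or.inl h
        · exact Or.inr h
      · rintro (rfl | h)
        · exact hs.1.le
        · exact le_trans (htj_mono.monotone h.le) hs.1.le
    have hadd := intervalIntegral.integral_add_adjacent_intervals
      (hΞint 0 (tj nst)) (hΞint (tj nst) t)
    have hB := claimB (nst : ℕ) nst rfl
    have hxp := hxim nst
    rw [hΞeq t ht, hΞpt, hfilt, Finset.prod_insert hnotmem,
      Finset.sum_insert hnotmem, ← hadd, hsegf, Finset.prod_insert hnotmem]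
    linear_combination hB - ν (tj nst) (u nst) * hxp
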